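/- Let X' = (t',x') ∈ Q, and let R > 0 and 0 < t̄ < t' be such that the closure of B_t̄(X',R) is contained in Q and u(t,x) = min over y ∈ Ω of [(t − t̄) L((x − y)/(t − t̄)) + u(t̄, y)] for each (t,x) ∈ B_t̄(X',R). If (t,x) ∈ B_t̄(X',R) is a point of differentiability of u and y ∈ Ω attains the minimum, i.e. u(t,x) = (t − t̄) L((x − y)/(t − t̄)) + u(t̄, y), then Du(t,x) = ( −L((x−y)/(t−t̄)) , (1/(t−t̄)) ∇L(x−y) ) and Dv_t̄(t,x) = ( u(t̄,y) , ∇L(x−y) ), where ∇L(q) = A⁻¹q. -/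

import Mathlib

open scoped RealInnerProductSpace
open Filter Topology Set Metric

noncomputable section

/-- The Lagrangian `L(q) = ½ ⟨A⁻¹ q, q⟩`. -/
def Lag {n : ℕ} (A : Matrix (Fin n) (Fin n) ℝ) (q : EuclideanSpace ℝ (Fin n)) : ℝ :=
  (1 / 2) * ⟪Matrix.toEuclideanLin A⁻¹ q, q⟫

/-- The Hamiltonian `H(p) = ½ ⟨A p, p⟩`. -/
def Ham {n : ℕ} (A : Matrix (Fin n) (Fin n) ℝ) (p : EuclideanSpace ℝ (Fin n)) : ℝ :=
  (1 / 2) * ⟪Matrix.toEuclideanLin A p, p⟫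

/-- Euclidean norm on `ℝ × ℝⁿ`. -/
def pnorm {n : ℕ} (V : ℝ × EuclideanSpace ℝ (Fin n)) : ℝ :=
  Real.sqrt (V.1 ^ 2 + ‖V.2‖ ^ 2)

/-- Euclidean pairing on `ℝ × ℝⁿ`. -/
def pairR {n : ℕ} (P V : ℝ × EuclideanSpace ℝ (Fin n)) : ℝ :=
  P.1 * V.1 + ⟪P.2, V.2⟫

/-- Open Euclidean ball in `ℝ × ℝⁿ`. -/
def pball {n : ℕ} (X : ℝ × EuclideanSpace ℝ (Fin n)) (R : ℝ) :
    Set (ℝ × EuclideanSpace ℝ (Fin n)) :=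
  {Y | pnorm (Y - X) < R}

/-- `B_t̄(X,R) = ((t̄,∞) × ℝⁿ) ∩ B(X,R)`. -/
def tball {n : ℕ} (tbar : ℝ) (X : ℝ × EuclideanSpace ℝ (Fin n)) (R : ℝ) :
    Set (ℝ × EuclideanSpace ℝ (Fin n)) :=
  {Y | tbar < Y.1} ∩ pball X R

/-- Superdifferential of `w` at `X`:
`P ∈ D⁺w(X)` iff `limsup_{Y→X} (w(Y)−w(X)−⟨P,Y−X⟩)/|Y−X| ≤ 0`. -/
def superDiff {n : ℕ} (w : ℝ × EuclideanSpace ℝ (Fin n) → ℝ)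
    (X P : ℝ × EuclideanSpace ℝ (Fin n)) : Prop :=
  ∀ ε > 0, ∀ᶠ Y in 𝓝[≠] X, w Y - w X - pairR P (Y - X) ≤ ε * pnorm (Y - X)

/-- The continuous linear functional on `ℝ × ℝⁿ` represented by the vector `P`. -/
noncomputable def pairCLM {n : ℕ} (P : ℝ × EuclideanSpace ℝ (Fin n)) :
    (ℝ × EuclideanSpace ℝ (Fin n)) →L[ℝ] ℝ :=
  P.1 • ContinuousLinearMap.fst ℝ ℝ (EuclideanSpace ℝ (Fin n)) +
    (innerSL ℝ P.2).comp (ContinuousLinearMap.snd ℝ ℝ (EuclideanSpace ℝ (Fin n)))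

set_option maxHeartbeats 1000000 in
/-- if `(t,x) ∈ B_t̄(X',R)` is a point of differentiability of `u` and
`y ∈ Ω` attains the minimum in the representation formula, then
`Du(t,x) = (−L((x−y)/(t−t̄)), (1/(t−t̄)) A⁻¹(x−y))` and
`Dv_t̄(t,x) = (u(t̄,y), A⁻¹(x−y))`. -/
theorem statement7
    {n : ℕ} (hn : 1 ≤ n)
    (Ω : Set (EuclideanSpace ℝ (Fin n))) (hΩo : IsOpen Ω)
    (hΩb : Bornology.IsBounded Ω)
    (A : Matrix (Fin n) (Fin n) ℝ) (hA : A.PosDef)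
    (Q : Set (ℝ × EuclideanSpace ℝ (Fin n))) (hQ : Q = Ioi (0 : ℝ) ×ˢ Ω)
    (φ u : ℝ × EuclideanSpace ℝ (Fin n) → ℝ)
    (hφ : ∃ K, LipschitzOnWith K φ (frontier Q))
    (hcomp : ∀ t x s y, (t, x) ∈ frontier Q → (s, y) ∈ frontier Q → 0 ≤ s → s < t →
      φ (t, x) - φ (s, y) ≤ (t - s) * Lag A ((t - s)⁻¹ • (x - y)))
    (hu : ∀ X ∈ closure Q, IsLeast
      {v | ∃ s y, (s, y) ∈ frontier Q ∧ s < X.1 ∧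
        v = (X.1 - s) * Lag A ((X.1 - s)⁻¹ • (X.2 - y)) + φ (s, y)} (u X))
    (t' : ℝ) (x' : EuclideanSpace ℝ (Fin n)) (hX' : (t', x') ∈ Q)
    (R : ℝ) (hR : 0 < R) (tbar : ℝ) (htbar0 : 0 < tbar) (htbar : tbar < t')
    (hcl : closure (tball tbar (t', x') R) ⊆ Q)
    (hmin : ∀ X ∈ tball tbar (t', x') R,
      IsLeast {v | ∃ y ∈ Ω,
        v = (X.1 - tbar) * Lag A ((X.1 - tbar)⁻¹ • (X.2 - y)) + u (tbar, y)} (u X))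
    (t : ℝ) (x : EuclideanSpace ℝ (Fin n)) (htx : (t, x) ∈ tball tbar (t', x') R)
    (y : EuclideanSpace ℝ (Fin n)) (hy : y ∈ Ω)
    (hymin : u (t, x) = (t - tbar) * Lag A ((t - tbar)⁻¹ • (x - y)) + u (tbar, y))
    (f : (ℝ × EuclideanSpace ℝ (Fin n)) →L[ℝ] ℝ)
    (hf : HasFDerivAt u f (t, x)) :
    f = pairCLM (-Lag A ((t - tbar)⁻¹ • (x - y)),
        (t - tbar)⁻¹ • Matrix.toEuclideanLin A⁻¹ (x - y)) ∧
    HasFDerivAt (fun X : ℝ × EuclideanSpace ℝ (Fin n) => (X.1 - tbar) * u X)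
      (pairCLM (u (tbar, y), Matrix.toEuclideanLin A⁻¹ (x - y))) (t, x) := by
  classical
  have hst : tbar < t := htx.1
  have hs0 : (0:ℝ) < t - tbar := sub_pos.mpr hst
  have hsne : t - tbar ≠ 0 := ne_of_gt hs0
  set T : EuclideanSpace ℝ (Fin n) →L[ℝ] EuclideanSpace ℝ (Fin n) :=
    LinearMap.toContinuousLinearMap (Matrix.toEuclideanLin A⁻¹) with hT
  have hTapp : ∀ v, T v = Matrix.toEuclideanLin A⁻¹ v := fun v => rfl
  have hsym : ∀ u v : EuclideanSpace ℝ (Fin n), ⟪T u, v⟫ = ⟪u, T v⟫ :=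
    fun u v => (Matrix.isHermitian_iff_isSymmetric.mp hA.1.inv) u v
  have hsym2 : ∀ u v : EuclideanSpace ℝ (Fin n), ⟪T u, v⟫ = ⟪T v, u⟫ := by
    intro u v; rw [hsym u v, real_inner_comm]
  -- the smooth comparison function
  set z := x - y with hz
  set gfun : ℝ × EuclideanSpace ℝ (Fin n) → ℝ :=
    fun X => (X.1 - tbar) * Lag A ((X.1 - tbar)⁻¹ • (X.2 - y)) + u (tbar, y) with hg
  set hfun : ℝ × EuclideanSpace ℝ (Fin n) → ℝ :=
    fun X => (1/2) * ((X.1 - tbar)⁻¹ * ⟪T (X.2 - y), X.2 - y⟫) + u (tbar, y) with hh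
  -- derivative of hfun
  have hc : HasFDerivAt (fun X : ℝ × EuclideanSpace ℝ (Fin n) => (X.1 - tbar)⁻¹)
      ((-((t - tbar)^2)⁻¹) • (ContinuousLinearMap.fst ℝ ℝ (EuclideanSpace ℝ (Fin n)))) (t, x) := by
    have h1 : HasDerivAt (fun s : ℝ => (s - tbar)⁻¹) (-((t - tbar)^2)⁻¹) t := by
      have := ((hasDerivAt_id t).sub_const tbar).inv hsne
      have e : (-1 / (id t - tbar) ^ 2 : ℝ) = -((t - tbar) ^ 2)⁻¹ := by simp [neg_div, one_div]
      exact this.congr_deriv e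
    have hfst : HasFDerivAt (Prod.fst : ℝ × EuclideanSpace ℝ (Fin n) → ℝ)
        (ContinuousLinearMap.fst ℝ ℝ (EuclideanSpace ℝ (Fin n))) (t, x) := hasFDerivAt_fst
    have h2 := h1.comp_hasFDerivAt (t, x) hfst
    have h3 : HasFDerivAt (fun X : ℝ × EuclideanSpace ℝ (Fin n) => (X.1 - tbar)⁻¹)
        (-(((t - tbar) ^ 2)⁻¹ • ContinuousLinearMap.fst ℝ ℝ (EuclideanSpace ℝ (Fin n)))) (t, x) := by
      simpa [Function.comp_def] using h2
    exact h3.congr_fderiv (neg_smul _ _).symm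
  have hm : HasFDerivAt (fun X : ℝ × EuclideanSpace ℝ (Fin n) => X.2 - y)
      (ContinuousLinearMap.snd ℝ ℝ _) (t, x) := (hasFDerivAt_snd).sub_const y
  have hb : HasFDerivAt (fun X : ℝ × EuclideanSpace ℝ (Fin n) => ⟪T (X.2 - y), X.2 - y⟫)
      ((fderivInnerCLM ℝ (T z, z)).comp
        ((T.comp (ContinuousLinearMap.snd ℝ ℝ _)).prod (ContinuousLinearMap.snd ℝ ℝ _))) (t, x) :=
    ((T.hasFDerivAt.comp (t, x) hm)).inner ℝ hm
  have hDh : HasFDerivAt hfun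
      ((1/2 : ℝ) • ((t - tbar)⁻¹ • ((fderivInnerCLM ℝ (T z, z)).comp
          ((T.comp (ContinuousLinearMap.snd ℝ ℝ _)).prod (ContinuousLinearMap.snd ℝ ℝ _))) +
        (⟪T z, z⟫ : ℝ) • ((-((t - tbar)^2)⁻¹) •
          (ContinuousLinearMap.fst ℝ ℝ (EuclideanSpace ℝ (Fin n)))))) (t, x) :=
    ((hc.mul hb).const_mul (1/2)).add_const (u (tbar, y))
  -- gfun = hfun near (t, x)
  have hgh : gfun =ᶠ[𝓝 (t, x)] hfun := by
    have hopen : IsOpen {X : ℝ × EuclideanSpace ℝ (Fin n) | tbar < X.1} :=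
      isOpen_lt continuous_const continuous_fst
    filter_upwards [hopen.mem_nhds hst] with X hX
    have hXne : X.1 - tbar ≠ 0 := ne_of_gt (sub_pos.mpr hX)
    simp only [hg, hh, Lag, ← hTapp, map_smul, real_inner_smul_left, real_inner_smul_right,
      ContinuousLinearMap.map_smul, smul_eq_mul]
    field_simp
  have hDg : HasFDerivAt gfun
      ((1/2 : ℝ) • ((t - tbar)⁻¹ • ((fderivInnerCLM ℝ (T z, z)).comp
          ((T.comp (ContinuousLinearMap.snd ℝ ℝ _)).prod (ContinuousLinearMap.snd ℝ ℝ _))) +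
        (⟪T z, z⟫ : ℝ) • ((-((t - tbar)^2)⁻¹) •
          (ContinuousLinearMap.fst ℝ ℝ (EuclideanSpace ℝ (Fin n)))))) (t, x) :=
    hDh.congr_of_eventuallyEq hgh
  -- that derivative equals pairCLM P
  have hLagval : Lag A ((t - tbar)⁻¹ • (x - y)) = (1/2) * ((t-tbar)⁻¹ * ((t-tbar)⁻¹ * ⟪T z, z⟫)) := by
    simp only [Lag, ← hTapp, map_smul, real_inner_smul_left, real_inner_smul_right,
      ContinuousLinearMap.map_smul, smul_eq_mul, hz]
    try ring
  have hDeq : ((1/2 : ℝ) • ((t - tbar)⁻¹ • ((fderivInnerCLM ℝ (T z, z)).comp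
          ((T.comp (ContinuousLinearMap.snd ℝ ℝ _)).prod (ContinuousLinearMap.snd ℝ ℝ _))) +
        (⟪T z, z⟫ : ℝ) • ((-((t - tbar)^2)⁻¹) •
          (ContinuousLinearMap.fst ℝ ℝ (EuclideanSpace ℝ (Fin n))))))
      = pairCLM (-Lag A ((t - tbar)⁻¹ • (x - y)),
          (t - tbar)⁻¹ • Matrix.toEuclideanLin A⁻¹ (x - y)) := by
    apply ContinuousLinearMap.ext
    intro V
    simp only [pairCLM, ContinuousLinearMap.add_apply, ContinuousLinearMap.smul_apply,
      ContinuousLinearMap.comp_apply, ContinuousLinearMap.prod_apply,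
      ContinuousLinearMap.coe_fst', ContinuousLinearMap.coe_snd',
      fderivInnerCLM_apply, innerSL_apply_apply, smul_eq_mul, hLagval]
    rw [hsym2 V.2 z]
    rw [show ((t - tbar)⁻¹ • Matrix.toEuclideanLin A⁻¹ (x - y) : EuclideanSpace ℝ (Fin n))
        = (t - tbar)⁻¹ • T z from rfl]
    rw [real_inner_smul_left]
    have : ((t - tbar)^2)⁻¹ = (t-tbar)⁻¹ * (t-tbar)⁻¹ := by rw [sq, mul_inv]
    rw [this]; ring
  have hDg' : HasFDerivAt gfun (pairCLM (-Lag A ((t - tbar)⁻¹ • (x - y)),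
      (t - tbar)⁻¹ • Matrix.toEuclideanLin A⁻¹ (x - y))) (t, x) := hDg.congr_fderiv hDeq
  -- local max of u - gfun at (t,x)
  have hopen : IsOpen (tball tbar (t', x') R) := by
    apply IsOpen.inter
    · exact isOpen_lt continuous_const continuous_fst
    · unfold pball pnorm
      apply isOpen_lt _ continuous_const
      have hc0 : Continuous fun Y : ℝ × EuclideanSpace ℝ (Fin n) => Y - (t', x') :=
        continuous_id.sub continuous_const
      exact Real.continuous_sqrt.comp
        (((continuous_fst.comp hc0).pow 2).add (((continuous_snd.comp hc0).norm).pow 2))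
  have hmax : IsLocalMax (fun X => u X - gfun X) (t, x) := by
    filter_upwards [hopen.mem_nhds htx] with X hX
    have hle : u X ≤ gfun X := (hmin X hX).2 ⟨y, hy, rfl⟩
    have heq : u (t, x) = gfun (t, x) := hymin
    simp only [heq, sub_self, hz]
    linarith
  have hzero : f - pairCLM (-Lag A ((t - tbar)⁻¹ • (x - y)),
      (t - tbar)⁻¹ • Matrix.toEuclideanLin A⁻¹ (x - y)) = 0 :=
    hmax.hasFDerivAt_eq_zero (hf.sub hDg')
  have hfeq : f = pairCLM (-Lag A ((t - tbar)⁻¹ • (x - y)),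
      (t - tbar)⁻¹ • Matrix.toEuclideanLin A⁻¹ (x - y)) := by
    have := sub_eq_zero.mp hzero
    exact this
  refine ⟨hfeq, ?_⟩
  -- second part
  have h1 : HasFDerivAt (fun X : ℝ × EuclideanSpace ℝ (Fin n) => X.1 - tbar)
      (ContinuousLinearMap.fst ℝ ℝ (EuclideanSpace ℝ (Fin n))) (t, x) :=
    (hasFDerivAt_fst).sub_const tbar
  have hprod := h1.mul hf
  have hDeq2 : ((t - tbar) • f + u (t, x) • ContinuousLinearMap.fst ℝ ℝ (EuclideanSpace ℝ (Fin n)))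
      = pairCLM (u (tbar, y), Matrix.toEuclideanLin A⁻¹ (x - y)) := by
    apply ContinuousLinearMap.ext
    intro V
    simp only [hfeq, pairCLM, ContinuousLinearMap.add_apply, ContinuousLinearMap.smul_apply,
      ContinuousLinearMap.comp_apply, ContinuousLinearMap.coe_fst', ContinuousLinearMap.coe_snd',
      innerSL_apply_apply, smul_eq_mul]
    rw [show ((t - tbar)⁻¹ • Matrix.toEuclideanLin A⁻¹ (x - y) : EuclideanSpace ℝ (Fin n))
        = (t - tbar)⁻¹ • T z from rfl, real_inner_smul_left,
      show (Matrix.toEuclideanLin A⁻¹ (x - y) : EuclideanSpace ℝ (Fin n)) = T z from rfl]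
    rw [hymin]
    field_simp
    ring
  exact hprod.congr_fderiv hDeq2
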